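/- For a nonnegative integrable function p on (0,∞) with ∫₀^∞ p = 1, the Laplace transform of x ↦ ∫_x^∞ (1/u) p(u) du at s > 0 equals (1/s) ∫₀^s p̂(s') ds', where p̂ is the Laplace transform of p, provided ∫₀^∞ (1/u) p(u) du < ∞. -/

import Mathlib

open MeasureTheory Real Set

lemma exp_interval_aux (s u : ℝ) (hs : s ≠ 0) :
    ∫ x in (0:ℝ)..u, Real.exp (-(s * x)) = (1 - Real.exp (-(s * u))) / s := by
  have h : ∀ x : ℝ, Real.exp (-(s * x)) = Real.exp ((-s) * x) := by
    intro x; ring_nf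
  simp_rw [h]
  rw [intervalIntegral.integral_comp_mul_left Real.exp (neg_ne_zero.mpr hs),
    integral_exp]
  field_simp
  rw [smul_eq_mul, mul_zero, neg_zero, Real.exp_zero, ← mul_assoc, mul_neg, mul_one_div_cancel hs]
  ring

theorem laplace_of_tail_integral (p : ℝ → ℝ)
    (hint : IntegrableOn p (Ioi 0))
    (hpos : ∀ᵐ x ∂(volume.restrict (Ioi (0:ℝ))), 0 ≤ p x)
    (hone : ∫ x in Ioi (0:ℝ), p x = 1)
    (hquot : IntegrableOn (fun u => p u / u) (Ioi 0)) :
    ∀ s : ℝ, 0 < s →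
      ∫ x in Ioi (0:ℝ), Real.exp (-(s * x)) * (∫ u in Ioi x, p u / u)
        = (1 / s) * ∫ s' in (0:ℝ)..s, ∫ x in Ioi (0:ℝ), Real.exp (-(s' * x)) * p x := by
  intro s hs
  set μ := volume.restrict (Ioi (0:ℝ)) with hμ
  set ν := volume.restrict (Ioc (0:ℝ) s) with hν
  have hexp_int : Integrable (fun x => Real.exp (-(s * x))) μ := by
    exact (by simpa [neg_mul] using exp_neg_integrableOn_Ioi 0 hs : IntegrableOn (fun x => Real.exp (-(s * x))) (Ioi 0))
  -- the common middle value
  set M : ℝ := ∫ u in Ioi (0:ℝ), (p u / u) * ((1 - Real.exp (-(s * u))) / s) with hM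
  -- LHS part
  set F : ℝ → ℝ → ℝ := fun x u =>
    {z : ℝ × ℝ | z.1 < z.2}.indicator
      (fun z => Real.exp (-(s * z.1)) * (p z.2 / z.2)) (x, u) with hF
  have hmeas_lt : MeasurableSet {z : ℝ × ℝ | z.1 < z.2} :=
    measurableSet_lt measurable_fst measurable_snd
  have hFint : Integrable (Function.uncurry F) (μ.prod μ) := by
    have : Integrable (fun z : ℝ × ℝ => Real.exp (-(s * z.1)) * (p z.2 / z.2)) (μ.prod μ) :=
      hexp_int.mul_prod hquot
    exact this.indicator hmeas_lt
  have hLHS : (∫ x in Ioi (0:ℝ), Real.exp (-(s * x)) * (∫ u in Ioi x, p u / u))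
      = ∫ x, (∫ u, F x u ∂μ) ∂μ := by
    refine setIntegral_congr_fun measurableSet_Ioi (fun x hx => ?_)
    have hx0 : (0:ℝ) < x := hx
    have h1 : ∀ u : ℝ, F x u
        = (Ioi x).indicator (fun u => Real.exp (-(s * x)) * (p u / u)) u := by
      intro u
      simp only [hF, Set.indicator_apply, Set.mem_setOf_eq, Set.mem_Ioi]
    simp_rw [h1]
    rw [integral_indicator measurableSet_Ioi, hμ,
      Measure.restrict_restrict measurableSet_Ioi,
      Set.inter_eq_left.mpr (Ioi_subset_Ioi hx0.le),
      integral_const_mul]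
  have hswap : (∫ x, (∫ u, F x u ∂μ) ∂μ) = ∫ u, (∫ x, F x u ∂μ) ∂μ :=
    integral_integral_swap hFint
  have hmid : (∫ u, (∫ x, F x u ∂μ) ∂μ) = M := by
    refine setIntegral_congr_fun measurableSet_Ioi (fun u hu => ?_)
    have hu0 : (0:ℝ) < u := hu
    have h1 : ∀ x : ℝ, F x u
        = (Iio u).indicator (fun x => Real.exp (-(s * x)) * (p u / u)) x := by
      intro x
      simp only [hF, Set.indicator_apply, Set.mem_setOf_eq, Set.mem_Iio]
    simp_rw [h1]
    rw [integral_indicator measurableSet_Iio, hμ,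
      Measure.restrict_restrict measurableSet_Iio,
      Set.Iio_inter_Ioi, integral_mul_const, ← integral_Ioc_eq_integral_Ioo,
      ← intervalIntegral.integral_of_le hu0.le, exp_interval_aux s u hs.ne']
    ring
  -- RHS part
  have hGaesm : AEStronglyMeasurable
      (fun z : ℝ × ℝ => Real.exp (-(z.1 * z.2)) * p z.2) (ν.prod μ) := by
    exact (Continuous.aestronglyMeasurable (by continuity)).mul hint.1.comp_snd
  have hbound : Integrable (fun z : ℝ × ℝ => p z.2) (ν.prod μ) := by
    simpa using (integrable_const (1:ℝ)).mul_prod hint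
  have hmem : ∀ᵐ z ∂(ν.prod μ), z ∈ Ioc (0:ℝ) s ×ˢ Ioi (0:ℝ) := by
    rw [hν, hμ, Measure.prod_restrict]
    exact ae_restrict_mem (measurableSet_Ioc.prod measurableSet_Ioi)
  have hGint : Integrable (fun z : ℝ × ℝ => Real.exp (-(z.1 * z.2)) * p z.2) (ν.prod μ) := by
    refine hbound.mono hGaesm ?_
    filter_upwards [hmem] with z hz
    rcases hz with ⟨hz1, hz2⟩
    have h1 : Real.exp (-(z.1 * z.2)) ≤ 1 := by
      rw [Real.exp_le_one_iff]
      have := mul_nonneg hz1.1.le (le_of_lt hz2)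
      linarith
    have h0 : (0:ℝ) ≤ Real.exp (-(z.1 * z.2)) := (Real.exp_pos _).le
    simp only [norm_mul, Real.norm_eq_abs]
    calc |Real.exp (-(z.1 * z.2))| * |p z.2| ≤ 1 * |p z.2| := by
          apply mul_le_mul_of_nonneg_right _ (abs_nonneg _)
          rwa [abs_of_nonneg h0]
      _ = |p z.2| := one_mul _
  have hRHS : (∫ s' in (0:ℝ)..s, ∫ x in Ioi (0:ℝ), Real.exp (-(s' * x)) * p x)
      = ∫ x in Ioi (0:ℝ), p x * ((1 - Real.exp (-(s * x))) / x) := by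
    rw [intervalIntegral.integral_of_le hs.le]
    have hswap2 : (∫ t, (∫ x, Real.exp (-(t * x)) * p x ∂μ) ∂ν)
        = ∫ x, (∫ t, Real.exp (-(t * x)) * p x ∂ν) ∂μ :=
      integral_integral_swap (f := fun t x => Real.exp (-(t * x)) * p x) hGint
    rw [show (∫ s' in Ioc (0:ℝ) s, ∫ x in Ioi (0:ℝ), Real.exp (-(s' * x)) * p x)
        = ∫ t, (∫ x, Real.exp (-(t * x)) * p x ∂μ) ∂ν from rfl, hswap2]
    refine setIntegral_congr_fun measurableSet_Ioi (fun x hx => ?_)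
    have hx0 : (0:ℝ) < x := hx
    have h1 : ∀ t : ℝ, Real.exp (-(t * x)) = Real.exp (-(x * t)) := by
      intro t; rw [mul_comm]
    simp_rw [h1]
    rw [hν, integral_mul_const, ← intervalIntegral.integral_of_le hs.le,
      exp_interval_aux x s hx0.ne']
    rw [mul_comm x s]
    ring
  have hfinal : (1 / s) * (∫ x in Ioi (0:ℝ), p x * ((1 - Real.exp (-(s * x))) / x)) = M := by
    rw [hM, ← integral_const_mul]
    refine setIntegral_congr_fun measurableSet_Ioi (fun u hu => ?_)
    ring
  rw [hLHS, hswap, hmid, hRHS, hfinal]
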